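/- Let A₁ ⊆ A₂ ⊆ … ⊆ A_k be K-absorbing sets, set A₀ = ∅, S_j = A_j \ A_{j−1}, and K_j f := K(1_{S_j}·f) for j = 1, …, k. Let 0 ≤ η < 1, β ≥ 0, and let f : E → [0,∞] be measurable such that for every j = 1, …, k: K_j f(x) ≤ η·f(x) for all x ∈ S_j, and K_j f(x) ≤ β·f(x) for all x ∈ A_k. Then for every j = 1, …, k and every x ∈ S_j, Σ_{m=0}^∞ K^m f(x) ≤ (1/(1−η))·(1 + β/(1−η))^{j−1} · f(x). -/

import Mathlib

open MeasureTheory ProbabilityTheory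
open scoped ENNReal NNReal

/-- The kernel operator `f ↦ Kf`, `Kf(x) = ∫ f(y) K(x,dy)`. -/
noncomputable def kernelOp {E : Type*} [MeasurableSpace E]
    (K : Kernel E E) (g : E → ℝ≥0∞) : E → ℝ≥0∞ :=
  fun x => ∫⁻ y, g y ∂(K x)

/-- Geometric series identity in `ℝ≥0`. -/
lemma stmt6_geom (c : ℝ≥0) : ∀ n : ℕ,
    (1 + c) ^ n = 1 + c * ∑ t ∈ Finset.range n, (1 + c) ^ t := by
  intro n
  induction n with
  | zero => simp
  | succ n ih =>
    rw [pow_succ, ih, Finset.sum_range_succ, ih]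
    ring

/-- The key algebraic identity in `ℝ≥0`. -/
lemma stmt6_alg (η β : ℝ≥0) (hη : η < 1) (n : ℕ) :
    1 + (∑ t ∈ Finset.range n, (1 - η)⁻¹ * (1 + β / (1 - η)) ^ t) * β
      + ((1 - η)⁻¹ * (1 + β / (1 - η)) ^ n) * η
      = (1 - η)⁻¹ * (1 + β / (1 - η)) ^ n := by
  have ha : (1 - η : ℝ≥0) ≠ 0 := (tsub_pos_of_lt hη).ne'
  have h1 : (1 - η) + η = 1 := tsub_add_cancel_of_le hη.le
  have hai : (1 - η) * (1 - η)⁻¹ = 1 := mul_inv_cancel₀ ha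
  set a := 1 - η with hadef
  set c := β / a with hcdef
  have hca : a * c = β := by
    rw [hcdef, mul_comm, div_mul_cancel₀ β ha]
  have key := stmt6_geom c n
  rw [← Finset.mul_sum]
  apply mul_left_cancel₀ ha
  calc a * (1 + (a⁻¹ * ∑ t ∈ Finset.range n, (1 + c) ^ t) * β
        + a⁻¹ * (1 + c) ^ n * η)
      = a + ((a * a⁻¹) * ∑ t ∈ Finset.range n, (1 + c) ^ t) * β
        + (a * a⁻¹) * (1 + c) ^ n * η := by ring
    _ = a + (∑ t ∈ Finset.range n, (1 + c) ^ t) * β + (1 + c) ^ n * η := by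
        rw [hai]; ring
    _ = a * (1 + c * ∑ t ∈ Finset.range n, (1 + c) ^ t) + η * (1 + c) ^ n := by
        rw [mul_add, mul_one, ← mul_assoc, hca]; ring
    _ = a * (1 + c) ^ n + η * (1 + c) ^ n := by rw [← key]
    _ = (a + η) * (1 + c) ^ n := by ring
    _ = (1 + c) ^ n := by rw [h1, one_mul]
    _ = (a * a⁻¹) * (1 + c) ^ n := by rw [hai, one_mul]
    _ = a * (a⁻¹ * (1 + c) ^ n) := by ring

/-- The kernel operator of a measurable function is measurable (no s-finiteness needed). -/
lemma stmt6_measurable_kernelOp {E : Type*} [MeasurableSpace E] (K : Kernel E E)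
    {g : E → ℝ≥0∞} (hg : Measurable g) : Measurable (kernelOp K g) := by
  have h : kernelOp K g
      = fun x => ⨆ n, (SimpleFunc.eapprox g n).lintegral (K x) := by
    funext x
    exact lintegral_eq_iSup_eapprox_lintegral hg
  rw [h]
  refine Measurable.iSup fun n => ?_
  simp only [SimpleFunc.lintegral]
  refine Finset.measurable_sum _ fun c _ => ?_
  exact (Kernel.measurable_coe K ((SimpleFunc.eapprox g n).measurableSet_fiber c)).const_mul c

/-- Theorem (upper estimate): with increasing `K`-absorbing sets `A₁ ⊆ … ⊆ A_k`,
slices `S_j = A_j \ A_{j−1}` and `K_j f = K(1_{S_j}·f)`, local smallness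
`K_j f ≤ η f` on `S_j` and global boundedness `K_j f ≤ β f` on `A_k` imply
`Σ_m K^m f ≤ (1/(1−η))·(1 + β/(1−η))^{j−1}·f` on `S_j`. -/
theorem stmt_6 {E : Type*} [MeasurableSpace E] (K : Kernel E E)
    (k : ℕ) (A : ℕ → Set E)
    (hA0 : A 0 = ∅)
    (hmeas : ∀ j, 1 ≤ j → j ≤ k → MeasurableSet (A j))
    (hmono : ∀ j, 1 ≤ j → j < k → A j ⊆ A (j + 1))
    (habs : ∀ j, 1 ≤ j → j ≤ k → ∀ x ∈ A j, K x (A j)ᶜ = 0)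
    (S : ℕ → Set E) (hS : ∀ j, 1 ≤ j → j ≤ k → S j = A j \ A (j - 1))
    (η β : ℝ≥0) (hη : η < 1)
    (f : E → ℝ≥0∞) (hf : Measurable f)
    (hloc : ∀ j, 1 ≤ j → j ≤ k → ∀ x ∈ S j,
      kernelOp K ((S j).indicator f) x ≤ (η : ℝ≥0∞) * f x)
    (hglob : ∀ j, 1 ≤ j → j ≤ k → ∀ x ∈ A k,
      kernelOp K ((S j).indicator f) x ≤ (β : ℝ≥0∞) * f x) :
    ∀ j, 1 ≤ j → j ≤ k → ∀ x ∈ S j,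
      ∑' m : ℕ, (kernelOp K)^[m] f x
        ≤ ((1 / (1 - η) * (1 + β / (1 - η)) ^ (j - 1) : ℝ≥0) : ℝ≥0∞) * f x := by
  -- the constants
  set cN : ℕ → ℝ≥0 := fun i => (1 - η)⁻¹ * (1 + β / (1 - η)) ^ i with hcN
  -- measurability of the sets
  have hmeasA : ∀ j, j ≤ k → MeasurableSet (A j) := by
    intro j hj
    rcases Nat.eq_zero_or_pos j with h0 | h1
    · rw [h0, hA0]; exact MeasurableSet.empty
    · exact hmeas j h1 hj
  have hmeasS : ∀ j, 1 ≤ j → j ≤ k → MeasurableSet (S j) := by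
    intro j h1 h2
    rw [hS j h1 h2]
    exact (hmeasA j h2).diff (hmeasA (j - 1) (le_trans (Nat.sub_le j 1) h2))
  -- monotonicity of the sets
  have hsub : ∀ j, j ≤ k → ∀ i, i ≤ j → A i ⊆ A j := by
    intro j
    induction j with
    | zero =>
      intro _ i hi
      obtain rfl : i = 0 := Nat.le_zero.mp hi
      exact subset_rfl
    | succ j ih =>
      intro hjk i hi
      have hstep : A j ⊆ A (j + 1) := by
        rcases Nat.eq_zero_or_pos j with h0 | h1
        · rw [h0, hA0]; exact Set.empty_subset _
        · exact hmono j h1 (by omega)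
      rcases eq_or_lt_of_le hi with rfl | hlt
      · exact subset_rfl
      · exact (ih (by omega) i (by omega)).trans hstep
  have hSsubA : ∀ j, 1 ≤ j → j ≤ k → S j ⊆ A j := by
    intro j h1 h2
    rw [hS j h1 h2]
    exact Set.diff_subset
  -- indicator decomposition of `A j` into slices
  have hdecomp : ∀ (g : E → ℝ≥0∞), ∀ j, j ≤ k → ∀ x,
      (A j).indicator g x = ∑ i ∈ Finset.range j, (S (i + 1)).indicator g x := by
    intro g j
    induction j with
    | zero => intro _ x; simp [hA0]
    | succ j ih =>
      intro hjk x
      rw [Finset.sum_range_succ, ← ih (by omega) x]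
      have hSS : S (j + 1) = A (j + 1) \ A j := by
        rw [hS (j + 1) (by omega) hjk]
        simp
      have hsub' : A j ⊆ A (j + 1) := hsub (j + 1) hjk j (by omega)
      by_cases hx1 : x ∈ A j
      · have hx2 : x ∈ A (j + 1) := hsub' hx1
        have hx3 : x ∉ S (j + 1) := by rw [hSS]; simp [hx1]
        simp [Set.indicator_of_mem hx1, Set.indicator_of_mem hx2,
          Set.indicator_of_notMem hx3]
      · by_cases hx2 : x ∈ A (j + 1)
        · have hx3 : x ∈ S (j + 1) := by rw [hSS]; exact ⟨hx2, hx1⟩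
          simp [Set.indicator_of_notMem hx1, Set.indicator_of_mem hx2,
            Set.indicator_of_mem hx3]
        · have hx3 : x ∉ S (j + 1) := by rw [hSS]; simp [hx2]
          simp [Set.indicator_of_notMem hx1, Set.indicator_of_notMem hx2,
            Set.indicator_of_notMem hx3]
  -- measurability of the iterates
  have hmeasIter : ∀ m, Measurable ((kernelOp K)^[m] f) := by
    intro m
    induction m with
    | zero => simpa using hf
    | succ m ih =>
      rw [Function.iterate_succ_apply']
      exact stmt6_measurable_kernelOp K ih
  -- kernel decomposition at points of an absorbing set
  have hker_decomp : ∀ (g : E → ℝ≥0∞), Measurable g → ∀ j, 1 ≤ j → j ≤ k →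
      ∀ x ∈ A j, kernelOp K g x
        = ∑ i ∈ Finset.range j, kernelOp K ((S (i + 1)).indicator g) x := by
    intro g hg j h1 hjk x hx
    have h0 : K x (A j)ᶜ = 0 := habs j h1 hjk x hx
    calc kernelOp K g x
        = ∫⁻ y in A j, g y ∂(K x) + ∫⁻ y in (A j)ᶜ, g y ∂(K x) :=
          (lintegral_add_compl g (hmeasA j hjk)).symm
      _ = ∫⁻ y in A j, g y ∂(K x) := by
          rw [setLIntegral_measure_zero _ _ h0, add_zero]
      _ = ∫⁻ y, (A j).indicator g y ∂(K x) :=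
          (lintegral_indicator (hmeasA j hjk) g).symm
      _ = ∫⁻ y, ∑ i ∈ Finset.range j, (S (i + 1)).indicator g y ∂(K x) := by
          simp_rw [hdecomp g j hjk]
      _ = ∑ i ∈ Finset.range j, ∫⁻ y, (S (i + 1)).indicator g y ∂(K x) :=
          lintegral_finset_sum _ (fun i hi =>
            hg.indicator (hmeasS (i + 1) (by omega)
              (by have := Finset.mem_range.mp hi; omega)))
      _ = ∑ i ∈ Finset.range j, kernelOp K ((S (i + 1)).indicator g) x := rfl
  -- partial sums and their recursion
  have hΦmeas : ∀ n, Measurable (fun y => ∑ m ∈ Finset.range n, (kernelOp K)^[m] f y) :=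
    fun n => Finset.measurable_sum _ fun m _ => hmeasIter m
  have hΦsucc : ∀ n x, ∑ m ∈ Finset.range (n + 1), (kernelOp K)^[m] f x
      = f x + kernelOp K (fun y => ∑ m ∈ Finset.range n, (kernelOp K)^[m] f y) x := by
    intro n x
    rw [Finset.sum_range_succ']
    simp only [Function.iterate_succ_apply', Function.iterate_zero_apply]
    have : kernelOp K (fun y => ∑ m ∈ Finset.range n, (kernelOp K)^[m] f y) x
        = ∑ m ∈ Finset.range n, kernelOp K ((kernelOp K)^[m] f) x :=
      lintegral_finset_sum _ (fun m _ => hmeasIter m)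
    rw [← this, add_comm]
  -- the key estimate for partial sums
  have key : ∀ j, 1 ≤ j → j ≤ k → ∀ n, ∀ x ∈ S j,
      ∑ m ∈ Finset.range n, (kernelOp K)^[m] f x ≤ (cN (j - 1) : ℝ≥0∞) * f x := by
    intro j
    induction j using Nat.strong_induction_on with
    | _ j IH =>
      intro hj1 hjk n
      obtain ⟨jj, rfl⟩ : ∃ jj, j = jj + 1 := ⟨j - 1, (Nat.succ_pred_eq_of_pos hj1).symm⟩
      induction n with
      | zero => intro x _; simp
      | succ n ihn =>
        intro x hx
        have hxAj : x ∈ A (jj + 1) := hSsubA (jj + 1) hj1 hjk hx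
        have hxAk : x ∈ A k := hsub k le_rfl (jj + 1) hjk hxAj
        rw [hΦsucc,
          hker_decomp _ (hΦmeas n) (jj + 1) hj1 hjk x hxAj]
        -- bound each slice term by the constant times `K_i f`
        have hterm : ∀ i ∈ Finset.range (jj + 1),
            kernelOp K ((S (i + 1)).indicator
              (fun y => ∑ m ∈ Finset.range n, (kernelOp K)^[m] f y)) x
            ≤ (cN i : ℝ≥0∞) * kernelOp K ((S (i + 1)).indicator f) x := by
          intro i hi
          have hik : i + 1 ≤ k := by
            have := Finset.mem_range.mp hi; omega
          have hin : ∀ y ∈ S (i + 1),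
              ∑ m ∈ Finset.range n, (kernelOp K)^[m] f y ≤ (cN i : ℝ≥0∞) * f y := by
            rcases eq_or_lt_of_le (Nat.lt_succ_iff.mp (Finset.mem_range.mp hi)) with
              heq | hlt
            · subst heq
              intro y hy
              simpa using ihn y hy
            · intro y hy
              simpa using IH (i + 1) (by omega) (by omega) hik n y hy
          calc kernelOp K ((S (i + 1)).indicator
                (fun y => ∑ m ∈ Finset.range n, (kernelOp K)^[m] f y)) x
              ≤ kernelOp K ((S (i + 1)).indicator (fun y => (cN i : ℝ≥0∞) * f y)) x := by
                apply lintegral_mono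
                intro y
                by_cases hy : y ∈ S (i + 1)
                · simpa [Set.indicator_of_mem hy] using hin y hy
                · simp [Set.indicator_of_notMem hy]
            _ = (cN i : ℝ≥0∞) * kernelOp K ((S (i + 1)).indicator f) x := by
                unfold kernelOp
                rw [← lintegral_const_mul' _ _ ENNReal.coe_ne_top]
                congr 1
                ext y
                by_cases hy : y ∈ S (i + 1) <;>
                  simp [Set.indicator_of_mem, Set.indicator_of_notMem, hy]
        -- assemble the estimate
        have halg : (1 : ℝ≥0∞) + ((∑ i ∈ Finset.range jj, (cN i : ℝ≥0∞)) * β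
            + (cN jj : ℝ≥0∞) * η) = (cN jj : ℝ≥0∞) := by
          have hNN := stmt6_alg η β hη jj
          have : ((1 + (∑ t ∈ Finset.range jj, cN t) * β + cN jj * η : ℝ≥0) : ℝ≥0∞)
              = ((cN jj : ℝ≥0) : ℝ≥0∞) := by
            exact_mod_cast congrArg (fun z : ℝ≥0 => (z : ℝ≥0∞)) hNN
          push_cast at this
          rw [← add_assoc]
          exact this
        calc f x + ∑ i ∈ Finset.range (jj + 1), kernelOp K ((S (i + 1)).indicator
              (fun y => ∑ m ∈ Finset.range n, (kernelOp K)^[m] f y)) x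
            ≤ f x + ∑ i ∈ Finset.range (jj + 1),
                (cN i : ℝ≥0∞) * kernelOp K ((S (i + 1)).indicator f) x :=
              add_le_add_right (Finset.sum_le_sum hterm) _
          _ = f x + (∑ i ∈ Finset.range jj,
                (cN i : ℝ≥0∞) * kernelOp K ((S (i + 1)).indicator f) x
                + (cN jj : ℝ≥0∞) * kernelOp K ((S (jj + 1)).indicator f) x) := by
              rw [Finset.sum_range_succ]
          _ ≤ f x + (∑ i ∈ Finset.range jj, (cN i : ℝ≥0∞) * ((β : ℝ≥0∞) * f x)
                + (cN jj : ℝ≥0∞) * ((η : ℝ≥0∞) * f x)) := by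
              apply add_le_add_right
              apply add_le_add
              · refine Finset.sum_le_sum fun i hi => ?_
                have hik : i + 1 ≤ k := by
                  have := Finset.mem_range.mp hi; omega
                exact mul_le_mul_right (hglob (i + 1) (by omega) hik x hxAk) _
              · exact mul_le_mul_right (hloc (jj + 1) hj1 hjk x hx) _
          _ = (1 + ((∑ i ∈ Finset.range jj, (cN i : ℝ≥0∞)) * β
                + (cN jj : ℝ≥0∞) * η)) * f x := by
              rw [← Finset.sum_mul]
              ring
          _ = (cN jj : ℝ≥0∞) * f x := by rw [halg]
          _ = (cN ((jj + 1) - 1) : ℝ≥0∞) * f x := by norm_num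
  -- conclude via the supremum of partial sums
  intro j hj1 hjk x hx
  have hgoal : ((1 / (1 - η) * (1 + β / (1 - η)) ^ (j - 1) : ℝ≥0) : ℝ≥0∞)
      = (cN (j - 1) : ℝ≥0∞) := by
    rw [hcN]
    norm_num
  rw [hgoal, ENNReal.tsum_eq_iSup_nat]
  exact iSup_le fun n => key j hj1 hjk n x hx
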